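/- For all real n > 3 and all real x with 2π/(n+1) ≤ x < π/2, we have (cos x)^n < 1 - sin x. -/

import Mathlib

set_option maxHeartbeats 1000000

open Real
theorem stmt0 (n x : ℝ) (hn : 3 < n) (hx1 : 2 * π / (n + 1) ≤ x) (hx2 : x < π / 2) :
    (cos x) ^ n < 1 - sin x := by
  have hπ := pi_pos
  have hπ4 : (3.14 : ℝ) < π := pi_gt_d2
  have hπ5 : π < (3.15 : ℝ) := pi_lt_d2
  have hn1 : (0:ℝ) < n + 1 := by linarith
  have hx0 : 0 < x := lt_of_lt_of_le (by positivity) hx1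
  have hxn : 2 * π ≤ x * (n + 1) := by
    rw [div_le_iff₀ hn1] at hx1; linarith
  have hc : 0 < cos x := cos_pos_of_mem_Ioo ⟨by linarith, hx2⟩
  have hc1 : cos x ≤ 1 := cos_le_one x
  have hs : 0 < sin x := sin_pos_of_pos_of_lt_pi hx0 (by linarith)
  have hs1 : sin x < 1 := by nlinarith [sin_sq_add_cos_sq x]
  have key : cos x ^ (n - 2) * (1 + sin x) < 1 := by
    rcases le_or_gt n (9/2) with hcase | hcase
    · -- small n : x > π/3 so cos x < 1/2, and cos x ^ (n-2) ≤ cos x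
      have h3 : π / 3 < x := by nlinarith
      have hchalf : cos x < 1/2 := by
        have := cos_lt_cos_of_nonneg_of_le_pi (by positivity) (by linarith) h3
        rwa [cos_pi_div_three] at this
      have hle : cos x ^ (n - 2) ≤ cos x := by
        calc cos x ^ (n-2) ≤ cos x ^ (1:ℝ) :=
              rpow_le_rpow_of_exponent_ge hc hc1 (by linarith)
          _ = cos x := rpow_one _
      nlinarith [rpow_pos_of_pos hc (n-2)]
    · -- large n : logarithmic estimate
      have hx2' : x < 2 := by linarith
      have hhalf : 0 < x/2 := by linarith
      have hsinh : x/2 - (x/2)^3/4 < sin (x/2) := by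
        have h := sin_gt_sub_cube hhalf
        have h3 : 0 < (x/2)^3 := by positivity
        linarith
      have hpos2 : 0 < x/2 - (x/2)^3/4 := by nlinarith [mul_pos hx0 hx0, mul_pos (mul_pos hx0 hx0) hx0]
      have hcosx : cos x = 2 * cos (x/2)^2 - 1 := by
        rw [show x = 2*(x/2) by ring, cos_two_mul]; ring_nf
      have hcosub : (x^2/2) * (1 - x^2/16)^2 < 1 - cos x := by
        have hpy := sin_sq_add_cos_sq (x/2)
        nlinarith [mul_self_lt_mul_self (le_of_lt hpos2) hsinh]
      have hlogc : (x^2/2) * (1 - x^2/16)^2 < -Real.log (cos x) := by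
        have := log_le_sub_one_of_pos hc
        linarith
      have hlogs : Real.log (1 + sin x) < x := by
        have h1 := log_le_sub_one_of_pos (show (0:ℝ) < 1 + sin x by linarith)
        have h2 := sin_lt hx0
        linarith
      have hxπ : x^2 < π^2/4 := by nlinarith
      have hu0 : (0.844 : ℝ) < 1 - π^2/64 := by nlinarith
      have hu : (1 - π^2/64) ≤ (1 - x^2/16) := by nlinarith
      have hkey2 : π * ((1 - π^2/64)*(1 - π^2/64)) * (n - 2) ≥ n + 1 := by
        have hπ2 : π^2 < 9.9225 := by nlinarith
        have ha : (0.844 : ℝ) < 1 - π^2/64 := by nlinarith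
        have hb : (0.712 : ℝ) < (1 - π^2/64)*(1 - π^2/64) := by nlinarith
        have hP : (2.23 : ℝ) ≤ π * ((1 - π^2/64)*(1 - π^2/64)) := by nlinarith
        nlinarith
      have hmain : x ≤ (n - 2) * ((x^2/2) * (1 - x^2/16)^2) := by
        have hn2 : (0:ℝ) < n - 2 := by linarith
        have hsq : (1 - π^2/64)*(1 - π^2/64) ≤ (1 - x^2/16)^2 := by nlinarith
        have s2 : (n + 1) * x ≤ π * ((1 - π^2/64)*(1 - π^2/64)) * (n - 2) * x := by
          nlinarith
        have s4 : 2 ≤ ((1 - π^2/64)*(1 - π^2/64)) * (n - 2) * x := by nlinarith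
        nlinarith [mul_le_mul_of_nonneg_left hsq (le_of_lt (mul_pos (mul_pos hn2 hx0) hx0))]
      have hsum : (n - 2) * Real.log (cos x) + Real.log (1 + sin x) < 0 := by
        have hn2 : (0:ℝ) < n - 2 := by linarith
        nlinarith [mul_lt_mul_of_pos_left hlogc hn2]
      have hrw : cos x ^ (n-2) * (1 + sin x)
          = Real.exp ((n-2) * Real.log (cos x) + Real.log (1 + sin x)) := by
        rw [Real.exp_add, Real.exp_log (by linarith : (0:ℝ) < 1 + sin x),
          rpow_def_of_pos hc]
        ring_nf
      rw [hrw]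
      calc Real.exp ((n-2) * Real.log (cos x) + Real.log (1 + sin x))
          < Real.exp 0 := Real.exp_lt_exp.mpr hsum
        _ = 1 := Real.exp_zero
  have hrepr : cos x ^ n = cos x ^ (n - 2) * (cos x)^(2:ℕ) := by
    rw [← Real.rpow_natCast (cos x) 2, ← Real.rpow_add hc]
    norm_num
  have hcsq : (cos x)^(2:ℕ) = (1 - sin x) * (1 + sin x) := by
    have h := sin_sq_add_cos_sq x
    linear_combination h
  rw [hrepr, hcsq]
  have hp := rpow_pos_of_pos hc (n-2)
  nlinarith [key, hs1, hp]
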